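/- With the notation above, for k = 2m (m >= 1) and q >= 1 the total degree of the Riley polynomial phi_{2m,q}(s,y) of J(2m,2q) equals (2m+1)q - 1. -/

import Mathlib

noncomputable section

/-- The ring of Laurent polynomials in `s` and ordinary polynomials in `y`
over `ℂ`, i.e. `ℂ[s^{±1}, y]`. -/
abbrev R2 : Type := AddMonoidAlgebra ℂ (ℤ × ℕ)

/-- The variable `s`. -/
def s : R2 := AddMonoidAlgebra.single (1, 0) 1
/-- The inverse variable `s⁻¹`. -/
def sInv : R2 := AddMonoidAlgebra.single (-1, 0) 1
/-- The variable `y`. -/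
def y : R2 := AddMonoidAlgebra.single (0, 1) 1

/-- `A = [[s,1],[0,s⁻¹]]`. -/
def A : Matrix (Fin 2) (Fin 2) R2 := !![s, 1; 0, sInv]
/-- `B = [[s,0],[-y,s⁻¹]]`. -/
def B : Matrix (Fin 2) (Fin 2) R2 := !![s, 0; -y, sInv]


/-- The total degree of a Laurent polynomial in `s` and `y`. -/
def deg (f : R2) : WithBot ℤ := f.coeff.support.sup fun p => ((p.1 + (p.2 : ℤ)) : WithBot ℤ)

/-! ### A mini theory of leading terms for the monomial order `Lex (weight, y-degree)`. -/

open scoped Pointwise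

def dl (p : ℤ × ℕ) : ℤ ×ₗ ℤ := toLex (p.1 + p.2, p.2)

lemma dl_mk (a : ℤ) (b : ℕ) : dl (a, b) = toLex (a + (b : ℤ), (b : ℤ)) := rfl

lemma lex_add (a b c d : ℤ) : toLex (a, b) + toLex (c, d) = toLex (a + c, b + d) := rfl

lemma dl_add (p q : ℤ × ℕ) : dl (p + q) = dl p + dl q := by
  rw [dl, dl, dl, lex_add]
  apply congrArg
  simp only [Prod.mk.injEq, Prod.fst_add, Prod.snd_add]
  push_cast
  constructor <;> ring

lemma dl_inj : Function.Injective dl := by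
  intro p q h
  have h2 := toLex.injective h
  simp only [Prod.mk.injEq] at h2
  obtain ⟨h1, h2⟩ := h2
  have e2 : p.2 = q.2 := by exact_mod_cast h2
  have e1 : p.1 = q.1 := by omega
  exact Prod.ext e1 e2

def LeD (f : R2) (d : ℤ ×ₗ ℤ) : Prop := ∀ p ∈ f.coeff.support, dl p ≤ d
def LtD (f : R2) (d : ℤ ×ₗ ℤ) : Prop := ∀ p ∈ f.coeff.support, dl p < d
def LdD (f : R2) (d : ℤ × ℕ) (c : ℂ) : Prop := c ≠ 0 ∧ f.coeff d = c ∧ LeD f (dl d)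

lemma lexlt_fst {a b c d : ℤ} (h : a < c) : toLex (a,b) < toLex (c,d) := Prod.Lex.left _ _ h
lemma lexle_fst {a b c d : ℤ} (h : a < c) : toLex (a,b) ≤ toLex (c,d) := (lexlt_fst h).le
lemma lexle_both {a b c d : ℤ} (h : a ≤ c) (h2 : b ≤ d) : toLex (a,b) ≤ toLex (c,d) := by
  rcases lt_or_eq_of_le h with h' | rfl
  · exact lexle_fst h'
  · exact Prod.Lex.le_iff.mpr (Or.inr ⟨rfl, h2⟩)

lemma LeD.mono {f : R2} {d e : ℤ ×ₗ ℤ} (h : LeD f d) (hde : d ≤ e) : LeD f e :=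
  fun p hp => (h p hp).trans hde
lemma LeD.monoB {f : R2} {a b c d : ℤ} (h : LeD f (toLex (a, b))) (h1 : a ≤ c) (h2 : b ≤ d) :
    LeD f (toLex (c, d)) := h.mono (lexle_both h1 h2)
lemma LtD.le {f : R2} {d : ℤ ×ₗ ℤ} (h : LtD f d) : LeD f d := fun p hp => (h p hp).le
lemma LeD.lt {f : R2} {d e : ℤ ×ₗ ℤ} (h : LeD f d) (hde : d < e) : LtD f e :=
  fun p hp => lt_of_le_of_lt (h p hp) hde
lemma LeD.add {f g : R2} {d : ℤ ×ₗ ℤ} (hf : LeD f d) (hg : LeD g d) : LeD (f + g) d := by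
  intro p hp
  rcases Finset.mem_union.mp (Finsupp.support_add (g₁ := f.coeff) (g₂ := g.coeff) hp) with h | h
  exacts [hf p h, hg p h]
lemma LtD.add {f g : R2} {d : ℤ ×ₗ ℤ} (hf : LtD f d) (hg : LtD g d) : LtD (f + g) d := by
  intro p hp
  rcases Finset.mem_union.mp (Finsupp.support_add (g₁ := f.coeff) (g₂ := g.coeff) hp) with h | h
  exacts [hf p h, hg p h]
lemma LeD.neg {f : R2} {d : ℤ ×ₗ ℤ} (hf : LeD f d) : LeD (-f) d := by
  intro p hp; exact hf p (by rwa [AddMonoidAlgebra.coeff_neg, Finsupp.support_neg] at hp)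
lemma LtD.neg {f : R2} {d : ℤ ×ₗ ℤ} (hf : LtD f d) : LtD (-f) d := by
  intro p hp; exact hf p (by rwa [AddMonoidAlgebra.coeff_neg, Finsupp.support_neg] at hp)
lemma LeD.sub {f g : R2} {d : ℤ ×ₗ ℤ} (hf : LeD f d) (hg : LeD g d) : LeD (f - g) d := by
  rw [sub_eq_add_neg]; exact hf.add hg.neg
lemma LeD.mul {f g : R2} {d e : ℤ ×ₗ ℤ} (hf : LeD f d) (hg : LeD g e) : LeD (f * g) (d + e) := by
  intro p hp
  obtain ⟨a, ha, b, hb, rfl⟩ := Finset.mem_add.mp (AddMonoidAlgebra.support_coeff_mul_subset f g hp)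
  rw [dl_add]
  exact add_le_add (hf a ha) (hg b hb)
lemma LeD.mulB {f g : R2} {a b c d J K : ℤ} (hf : LeD f (toLex (a, b))) (hg : LeD g (toLex (c, d)))
    (h1 : a + c ≤ J) (h2 : b + d ≤ K) : LeD (f * g) (toLex (J, K)) := by
  have := hf.mul hg
  rw [lex_add] at this
  exact this.monoB h1 h2
lemma LtD.mul_le {f g : R2} {d e : ℤ ×ₗ ℤ} (hf : LtD f d) (hg : LeD g e) :
    LtD (f * g) (d + e) := by
  intro p hp
  obtain ⟨a, ha, b, hb, rfl⟩ := Finset.mem_add.mp (AddMonoidAlgebra.support_coeff_mul_subset f g hp)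
  rw [dl_add]
  exact add_lt_add_of_lt_of_le (hf a ha) (hg b hb)
lemma LeD.single {a : ℤ × ℕ} {c : ℂ} {d : ℤ ×ₗ ℤ} (h : dl a ≤ d) :
    LeD (AddMonoidAlgebra.single a c) d := by
  intro p hp
  have := Finsupp.support_single_subset (by rwa [AddMonoidAlgebra.coeff_single] at hp : p ∈ (Finsupp.single a c).support)
  simp only [Finset.mem_singleton] at this
  subst this; exact h
lemma LdD.single {a : ℤ × ℕ} {c : ℂ} (hc : c ≠ 0) : LdD (AddMonoidAlgebra.single a c) a c :=
  ⟨hc, by rw [AddMonoidAlgebra.coeff_single, Finsupp.single_eq_same], LeD.single le_rfl⟩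

lemma mul_apply_lead {f g : R2} {d e : ℤ × ℕ} (hf : LeD f (dl d)) (hg : LeD g (dl e)) :
    (f * g).coeff (d + e) = f.coeff d * g.coeff e := by
  classical
  simp_rw [AddMonoidAlgebra.coeff_mul, Finsupp.sum]
  rw [Finset.sum_eq_single d, Finset.sum_eq_single e, if_pos rfl]
  · intro a ha hne
    apply if_neg
    intro hde
    have h1 : dl a < dl e := lt_of_le_of_ne (hg a ha) (fun hh => hne (dl_inj hh))
    have h3 : dl (d + a) = dl (d + e) := by rw [hde]
    rw [dl_add, dl_add] at h3
    exact absurd h3 (ne_of_lt (add_lt_add_right h1 _))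
  · intro h; rw [if_pos rfl, Finsupp.notMem_support_iff.1 h, mul_zero]
  · intro a ha hne
    apply Finset.sum_eq_zero
    intro b hb
    apply if_neg
    intro hde
    have h1 : dl a < dl d := lt_of_le_of_ne (hf a ha) (fun hh => hne (dl_inj hh))
    have h2 : dl b ≤ dl e := hg b hb
    have h3 : dl (a + b) = dl (d + e) := by rw [hde]
    rw [dl_add, dl_add] at h3
    exact absurd h3 (ne_of_lt (add_lt_add_of_lt_of_le h1 h2))
  · intro h
    apply Finset.sum_eq_zero
    intro b _
    apply ite_eq_right_iff.mpr
    intro _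
    rw [Finsupp.notMem_support_iff.1 h, zero_mul]

lemma LdD.le {f : R2} {d : ℤ × ℕ} {c : ℂ} (h : LdD f d c) : LeD f (dl d) := h.2.2

lemma LdD.mul {f g : R2} {d e : ℤ × ℕ} {c c' : ℂ} (hf : LdD f d c) (hg : LdD g e c') :
    LdD (f * g) (d + e) (c * c') := by
  obtain ⟨hc, hfd, hle⟩ := hf
  obtain ⟨hc', hgd, hle'⟩ := hg
  refine ⟨mul_ne_zero hc hc', ?_, by rw [dl_add]; exact hle.mul hle'⟩
  rw [mul_apply_lead hle hle', hfd, hgd]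

lemma LdD.add_lt {f g : R2} {d : ℤ × ℕ} {c : ℂ} (hf : LdD f d c) (hg : LtD g (dl d)) :
    LdD (f + g) d c := by
  obtain ⟨hc, hfd, hle⟩ := hf
  have hgd : g.coeff d = 0 := by
    by_contra h
    exact absurd (hg d (Finsupp.mem_support_iff.2 h)) (lt_irrefl _)
  exact ⟨hc, by rw [AddMonoidAlgebra.coeff_add, Finsupp.add_apply, hfd, hgd, add_zero], hle.add hg.le⟩

lemma LdD.neg {f : R2} {d : ℤ × ℕ} {c : ℂ} (hf : LdD f d c) : LdD (-f) d (-c) :=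
  ⟨neg_ne_zero.mpr hf.1, by rw [AddMonoidAlgebra.coeff_neg, Finsupp.neg_apply, hf.2.1], hf.2.2.neg⟩

lemma LdD.congr {f : R2} {d d' : ℤ × ℕ} {c c' : ℂ} (hf : LdD f d c) (hd : d = d') (hc : c = c') :
    LdD f d' c' := hd ▸ hc ▸ hf

lemma LdD.deg_eq {f : R2} {d : ℤ × ℕ} {c : ℂ} (h : LdD f d c) :
    deg f = ((d.1 + (d.2 : ℤ) : ℤ) : WithBot ℤ) := by
  obtain ⟨hc, hfd, hle⟩ := h
  apply le_antisymm
  · apply Finset.sup_le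
    intro p hp
    have h2 := hle p hp
    rw [dl, dl, Prod.Lex.le_iff] at h2
    have : p.1 + (p.2:ℤ) ≤ d.1 + d.2 := by
      rcases h2 with h' | ⟨h', _⟩
      · exact h'.le
      · exact h'.le
    exact_mod_cast WithBot.coe_le_coe.mpr this
  · exact Finset.le_sup (f := fun p : ℤ × ℕ => ((p.1 + (p.2:ℤ) : ℤ) : WithBot ℤ))
      (Finsupp.mem_support_iff.2 (by rw [hfd]; exact hc))

/-! ### Basic facts about `s`, `sInv`, `y`. -/

lemma hs : s * sInv = 1 := by
  rw [s, sInv, AddMonoidAlgebra.single_mul_single]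
  norm_num
  rfl

lemma ld_s : LdD s (1, 0) 1 := by rw [s]; exact LdD.single one_ne_zero
lemma ld_sInv : LdD sInv (-1, 0) 1 := by rw [sInv]; exact LdD.single one_ne_zero
lemma ld_y : LdD y (0, 1) 1 := by rw [y]; exact LdD.single one_ne_zero
lemma ld_one : LdD (1 : R2) (0, 0) 1 := by
  rw [AddMonoidAlgebra.one_def]; exact LdD.single one_ne_zero
lemma ld_y1 : LdD (y + 1) (0, 1) 1 := by
  refine ld_y.add_lt ?_
  exact ld_one.le.lt (lexlt_fst (by norm_num))

/-! ### Matrix computations. -/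

lemma hAinv : A⁻¹ = !![sInv, -1; 0, s] := by
  apply Matrix.inv_eq_right_inv
  rw [A, Matrix.mul_fin_two]
  refine Matrix.ext fun i j => ?_
  fin_cases i <;> fin_cases j <;> simp [Matrix.one_apply] <;>
    first | ring1 | linear_combination hs | linear_combination (-1 : R2) * hs

lemma hBinv : B⁻¹ = !![sInv, 0; y, s] := by
  apply Matrix.inv_eq_right_inv
  rw [B, Matrix.mul_fin_two]
  refine Matrix.ext fun i j => ?_
  fin_cases i <;> fin_cases j <;> simp [Matrix.one_apply] <;>
    first | ring1 | linear_combination hs | linear_combination (-1 : R2) * hs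

lemma hCm : B * A⁻¹ = !![1, -s; -(sInv*y), y+1] := by
  rw [hAinv, B, Matrix.mul_fin_two]
  refine Matrix.ext fun i j => ?_
  fin_cases i <;> fin_cases j <;> simp <;>
    first | ring1 | linear_combination hs | linear_combination (-1 : R2) * hs

lemma hDm : B⁻¹ * A = !![1, sInv; s*y, y+1] := by
  rw [hBinv, A, Matrix.mul_fin_two]
  refine Matrix.ext fun i j => ?_
  fin_cases i <;> fin_cases j <;> simp <;>
    first | ring1 | linear_combination hs | linear_combination (-1 : R2) * hs

lemma detC : (B * A⁻¹).det = 1 := by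
  rw [hCm, Matrix.det_fin_two_of]
  linear_combination (-y) * hs

lemma detD : (B⁻¹ * A).det = 1 := by
  rw [hDm, Matrix.det_fin_two_of]
  linear_combination (-y) * hs

/-- Cayley-Hamilton for 2×2 matrices of determinant 1. -/
lemma ch2 (M : Matrix (Fin 2) (Fin 2) R2) (hdet : M.det = 1) :
    M * M = (M 0 0 + M 1 1) • M - 1 := by
  rw [Matrix.det_fin_two] at hdet
  refine Matrix.ext fun i j => ?_
  fin_cases i <;> fin_cases j <;>
    simp [Matrix.mul_apply, Fin.sum_univ_two, Matrix.one_apply, Matrix.sub_apply,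
      Matrix.smul_apply, smul_eq_mul] <;>
    first | ring1 | linear_combination hdet | linear_combination -hdet

/-! ### The main invariant, by induction on `n` (with `m = n + 1`). -/

lemma invariant (n : ℕ) : ∃ fa ga ha ka pa ra ua va : R2,
    (B * A⁻¹) ^ (n+1) * (B⁻¹ * A) ^ (n+1) =
      !![s*s*fa + ga, s*ha + sInv*ka; s*pa + sInv*ra, ua + sInv*sInv*va] ∧
    LdD fa ((0 : ℤ), 2*n+1) (-1) ∧
    LeD ga (toLex ((2*n : ℤ), (2*n : ℤ))) ∧
    LeD ha (toLex ((2*n+1 : ℤ), (2*n+1 : ℤ))) ∧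
    LeD ka (toLex ((2*n : ℤ), (2*n : ℤ))) ∧
    LeD pa (toLex ((2*n+2 : ℤ), (2*n+2 : ℤ))) ∧
    LeD ra (toLex ((2*n+1 : ℤ), (2*n+1 : ℤ))) ∧
    LdD ua ((0 : ℤ), 2*n+2) 1 ∧
    LeD va (toLex ((2*n+1 : ℤ), (2*n+1 : ℤ))) ∧
    LdD (fa - ha) ((0 : ℤ), 2*n) 1 := by
  induction n with
  | zero =>
    refine ⟨-y, 1, -(y+1), 1, y*y+y, -y, (y+1)*(y+1), -y, ?_, ?_, ?_, ?_, ?_, ?_, ?_, ?_, ?_, ?_⟩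
    · rw [pow_one, pow_one, hCm, hDm, Matrix.mul_fin_two]
      refine Matrix.ext fun i j => ?_
      fin_cases i <;> fin_cases j <;> simp <;> ring1
    · exact ld_y.neg
    · exact ld_one.le.monoB (by norm_num) (by norm_num)
    · exact (ld_y1.neg).le.monoB (by norm_num) (by norm_num)
    · exact ld_one.le.monoB (by norm_num) (by norm_num)
    · exact ((ld_y.le.mulB ld_y.le le_rfl le_rfl).add
        (ld_y.le.monoB (by norm_num) (by norm_num))).monoB (by norm_num) (by norm_num)
    · exact ld_y.neg.le.monoB (by norm_num) (by norm_num)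
    · exact (ld_y1.mul ld_y1).congr (by norm_num) (by norm_num)
    · exact ld_y.neg.le.monoB (by norm_num) (by norm_num)
    · have e : -y - -(y+1) = (1 : R2) := by ring
      rw [e]
      exact ld_one.congr (by norm_num) rfl
  | succ n ih =>
    obtain ⟨fa, ga, ha, ka, pa, ra, ua, va, hmat, hf, hg, hh, hk, hp, hr, hu, hv, hfh⟩ := ih
    have hfle : LeD fa (toLex ((2*n+1 : ℤ), (2*n+1 : ℤ))) := by
      have := hf.le; rw [dl_mk] at this
      exact this.monoB (by push_cast; omega) (by push_cast; omega)
    have hule : LeD ua (toLex ((2*n+2 : ℤ), (2*n+2 : ℤ))) := by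
      have := hu.le; rw [dl_mk] at this
      exact this.monoB (by push_cast; omega) (by push_cast; omega)
    have hy1le : LeD (y + 1) (toLex ((1:ℤ), (1:ℤ))) := by
      have := ld_y1.le; rw [dl_mk] at this
      exact this.monoB (by norm_num) (by norm_num)
    have hyle : LeD y (toLex ((1:ℤ), (1:ℤ))) := by
      have := ld_y.le; rw [dl_mk] at this
      exact this.monoB (by norm_num) (by norm_num)
    have hhu : LeD (ha - ua) (toLex ((2*n+2 : ℤ), (2*n+2 : ℤ))) :=
      (hh.monoB (by omega) (by omega)).sub hule
    have hkv : LeD (ka - va) (toLex ((2*n+1 : ℤ), (2*n+1 : ℤ))) :=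
      (hk.monoB (by omega) (by omega)).sub hv
    -- the new components
    have hf' : LdD (fa - pa + y*(ha - ua)) ((0 : ℤ), 2*(n+1)+1) (-1) := by
      have e : fa - pa + y*(ha - ua) = -(y*ua) + (fa - pa + y*ha) := by ring
      rw [e]
      have hmain : LdD (-(y*ua)) ((0:ℤ), 2*(n+1)+1) (-1) := by
        refine ((ld_y.mul hu).neg).congr ?_ (by norm_num)
        simp only [Prod.mk_add_mk, Prod.mk.injEq]
        constructor <;> omega
      refine hmain.add_lt ?_
      rw [dl_mk]
      have hrest : LeD (fa - pa + y*ha) (toLex ((2*n+2 : ℤ), (2*n+2 : ℤ))) :=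
        ((hfle.monoB (by omega) (by omega)).sub (hp.monoB (by omega) (by omega))).add
          (hyle.mulB hh (by omega) (by omega))
      exact hrest.lt (lexlt_fst (by push_cast; omega))
    have hf'le : LeD (fa - pa + y*(ha - ua)) (toLex ((2*n+3 : ℤ), (2*n+3 : ℤ))) := by
      have := hf'.le; rw [dl_mk] at this
      exact this.monoB (by push_cast; omega) (by push_cast; omega)
    have hyy1 : LeD (y*(y+1)) (toLex ((2:ℤ), (2:ℤ))) := hyle.mulB hy1le le_rfl le_rfl
    have hyy : LeD (y*y) (toLex ((2:ℤ), (2:ℤ))) := hyle.mulB hyle le_rfl le_rfl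
    have hy1y1 : LeD ((y+1)*(y+1)) (toLex ((2:ℤ), (2:ℤ))) := hy1le.mulB hy1le le_rfl le_rfl
    have hg' : LeD (ga - ra + y*(ka - va)) (toLex ((2*n+2 : ℤ), (2*n+2 : ℤ))) :=
      ((hg.monoB (by omega) (by omega)).sub (hr.monoB (by omega) (by omega))).add
        (hyle.mulB hkv (by omega) (by omega))
    have hh' : LeD (fa - pa + y*(ha - ua) + (ha - ua))
        (toLex ((2*n+3 : ℤ), (2*n+3 : ℤ))) :=
      hf'le.add (hhu.monoB (by omega) (by omega))
    have hk' : LeD (ga - ra + y*(ka - va) + (ka - va))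
        (toLex ((2*n+2 : ℤ), (2*n+2 : ℤ))) :=
      hg'.add (hkv.monoB (by omega) (by omega))
    have hp' : LeD (-(y*fa) + (y+1)*pa + y*(y+1)*ua - y*y*ha)
        (toLex ((2*n+4 : ℤ), (2*n+4 : ℤ))) :=
      (((hyle.mulB hfle (by omega) (by omega)).neg.add
        (hy1le.mulB hp (by omega) (by omega))).add
        (hyy1.mulB hule (by omega) (by omega))).sub
        (hyy.mulB hh (by omega) (by omega))
    have hr' : LeD (-(y*ga) + (y+1)*ra + y*(y+1)*va - y*y*ka)
        (toLex ((2*n+3 : ℤ), (2*n+3 : ℤ))) :=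
      (((hyle.mulB hg (by omega) (by omega)).neg.add
        (hy1le.mulB hr (by omega) (by omega))).add
        (hyy1.mulB hv (by omega) (by omega))).sub
        (hyy.mulB hk (by omega) (by omega))
    have hu' : LdD (-(y*fa) + (y+1)*pa + (y+1)*(y+1)*ua - y*(y+1)*ha)
        ((0 : ℤ), 2*(n+1)+2) 1 := by
      have e : -(y*fa) + (y+1)*pa + (y+1)*(y+1)*ua - y*(y+1)*ha =
          (y+1)*((y+1)*ua) + (-(y*fa) + ((y+1)*pa - y*((y+1)*ha))) := by ring
      rw [e]
      have hmain : LdD ((y+1)*((y+1)*ua)) ((0:ℤ), 2*(n+1)+2) 1 := by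
        refine (ld_y1.mul (ld_y1.mul hu)).congr ?_ (by norm_num)
        simp only [Prod.mk_add_mk, Prod.mk.injEq]
        constructor <;> omega
      refine hmain.add_lt ?_
      rw [dl_mk]
      have hy1h : LeD ((y+1)*ha) (toLex ((2*n+2 : ℤ), (2*n+2 : ℤ))) :=
        hy1le.mulB hh (by omega) (by omega)
      have hrest : LeD (-(y*fa) + ((y+1)*pa - y*((y+1)*ha)))
          (toLex ((2*n+3 : ℤ), (2*n+3 : ℤ))) :=
        (hyle.mulB hfle (by omega) (by omega)).neg.add
          ((hy1le.mulB hp (by omega) (by omega)).sub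
            (hyle.mulB hy1h (by omega) (by omega)))
      exact hrest.lt (lexlt_fst (by push_cast; omega))
    have hv' : LeD (-(y*ga) + (y+1)*ra + (y+1)*(y+1)*va - y*(y+1)*ka)
        (toLex ((2*n+3 : ℤ), (2*n+3 : ℤ))) :=
      (((hyle.mulB hg (by omega) (by omega)).neg.add
        (hy1le.mulB hr (by omega) (by omega))).add
        (hy1y1.mulB hv (by omega) (by omega))).sub
        (hyy1.mulB hk (by omega) (by omega))
    have hfh' : LdD ((fa - pa + y*(ha - ua)) - (fa - pa + y*(ha - ua) + (ha - ua)))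
        ((0 : ℤ), 2*(n+1)) 1 := by
      have e : (fa - pa + y*(ha - ua)) - (fa - pa + y*(ha - ua) + (ha - ua)) =
          ua + (-ha) := by ring
      rw [e]
      have hmain : LdD ua ((0:ℤ), 2*(n+1)) 1 :=
        hu.congr (congrArg (Prod.mk (0:ℤ)) (by omega)) rfl
      refine hmain.add_lt ?_
      rw [dl_mk]
      exact (hh.neg).lt (lexlt_fst (by push_cast; omega))
    have hmat' : (B * A⁻¹) ^ (n+1+1) * (B⁻¹ * A) ^ (n+1+1) =
        !![s*s*(fa - pa + y*(ha - ua)) + (ga - ra + y*(ka - va)),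
           s*(fa - pa + y*(ha - ua) + (ha - ua)) + sInv*(ga - ra + y*(ka - va) + (ka - va));
           s*(-(y*fa) + (y+1)*pa + y*(y+1)*ua - y*y*ha) +
             sInv*(-(y*ga) + (y+1)*ra + y*(y+1)*va - y*y*ka),
           (-(y*fa) + (y+1)*pa + (y+1)*(y+1)*ua - y*(y+1)*ha) +
             sInv*sInv*(-(y*ga) + (y+1)*ra + (y+1)*(y+1)*va - y*(y+1)*ka)] := by
      have e : (B * A⁻¹) ^ (n+1+1) * (B⁻¹ * A) ^ (n+1+1) =
          (B * A⁻¹) * ((B * A⁻¹) ^ (n+1) * (B⁻¹ * A) ^ (n+1)) * (B⁻¹ * A) := by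
        rw [pow_succ' (B * A⁻¹), pow_succ (B⁻¹ * A)]
        simp only [mul_assoc]
      rw [e, hmat, hCm, hDm, Matrix.mul_fin_two, Matrix.mul_fin_two]
      refine Matrix.ext fun i j => ?_
      fin_cases i <;> fin_cases j <;> simp
      · linear_combination (-ra + y*ka - (s*sInv + 1)*y*va) * hs
      · linear_combination (s*fa - s*pa - sInv*ra - (y+1)*sInv*va) * hs
      · linear_combination (-(s*y*fa) - s*y^2*ha - sInv*y^2*ka + sInv*y*(y+1)*va) * hs
      · linear_combination (-(y*fa)*(s*sInv+1) + (y+1)*pa - y*(y+1)*ha) * hs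
    exact ⟨fa - pa + y*(ha - ua), ga - ra + y*(ka - va),
           fa - pa + y*(ha - ua) + (ha - ua), ga - ra + y*(ka - va) + (ka - va),
           -(y*fa) + (y+1)*pa + y*(y+1)*ua - y*y*ha,
           -(y*ga) + (y+1)*ra + y*(y+1)*va - y*y*ka,
           -(y*fa) + (y+1)*pa + (y+1)*(y+1)*ua - y*(y+1)*ha,
           -(y*ga) + (y+1)*ra + (y+1)*(y+1)*va - y*(y+1)*ka,
           hmat', hf',
           hg'.monoB (by push_cast; omega) (by push_cast; omega),
           hh'.monoB (by push_cast; omega) (by push_cast; omega),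
           hk'.monoB (by push_cast; omega) (by push_cast; omega),
           hp'.monoB (by push_cast; omega) (by push_cast; omega),
           hr'.monoB (by push_cast; omega) (by push_cast; omega),
           hu',
           hv'.monoB (by push_cast; omega) (by push_cast; omega),
           hfh'⟩

/-! ### The trace and the Riley polynomial `φ₁`. -/

/-- For `k = 2m` (`m ≥ 1`) and `q ≥ 1`, the total degree of the Riley polynomial
`φ_{2m,q}` of `J(2m,2q)` equals `(2m+1)q - 1`. -/
theorem stmt_8 (m q : ℕ) (hm : 1 ≤ m) (hq : 1 ≤ q) :
    deg (((((B * A⁻¹) ^ m * (B⁻¹ * A) ^ m) ^ q) 0 0) +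
        (sInv - s) * ((((B * A⁻¹) ^ m * (B⁻¹ * A) ^ m) ^ q) 0 1)) =
      ((2 * (m : ℤ) + 1) * (q : ℤ) - 1 : ℤ) := by
  obtain ⟨n, rfl⟩ : ∃ n, m = n + 1 := ⟨m - 1, by omega⟩
  obtain ⟨l, rfl⟩ : ∃ l, q = l + 1 := ⟨q - 1, by omega⟩
  obtain ⟨fa, ga, ha, ka, pa, ra, ua, va, hmat, hf, hg, hh, hk, hp, hr, hu, hv, hfh⟩ :=
    invariant n
  set W := (B * A⁻¹) ^ (n+1) * (B⁻¹ * A) ^ (n+1) with hW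
  have e00 : W 0 0 = s*s*fa + ga := by rw [hmat]; rfl
  have e01 : W 0 1 = s*ha + sInv*ka := by rw [hmat]; rfl
  have e11 : W 1 1 = ua + sInv*sInv*va := by rw [hmat]; rfl
  have hdet : W.det = 1 := by
    rw [hW, Matrix.det_mul, Matrix.det_pow, Matrix.det_pow, detC, detD]
    simp
  have hch : W * W = (W 0 0 + W 1 1) • W - 1 := ch2 W hdet
  -- normalized LeD forms
  have hfle : LeD fa (toLex ((2*n+1 : ℤ), (2*n+1 : ℤ))) := by
    have := hf.le; rw [dl_mk] at this
    exact this.monoB (by push_cast; omega) (by push_cast; omega)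
  have hule : LeD ua (toLex ((2*n+2 : ℤ), (2*n+2 : ℤ))) := by
    have := hu.le; rw [dl_mk] at this
    exact this.monoB (by push_cast; omega) (by push_cast; omega)
  have hfhle : LdD (fa - ha) ((0:ℤ), 2*n) 1 := hfh
  have hsile : LeD sInv (toLex ((-1 : ℤ), (0 : ℤ))) := by
    have := ld_sInv.le; rw [dl_mk] at this
    exact this.monoB (by norm_num) (by norm_num)
  -- the trace
  have hT : LdD (W 0 0 + W 1 1) ((2:ℤ), 2*n+1) (-1) := by
    have e : W 0 0 + W 1 1 = s*s*fa + ((ga + ua) + sInv*(sInv*va)) := by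
      rw [e00, e11]; ring
    rw [e]
    have hmain : LdD (s*s*fa) ((2:ℤ), 2*n+1) (-1) := by
      refine ((ld_s.mul ld_s).mul hf).congr ?_ (by norm_num)
      simp only [Prod.mk_add_mk, Prod.mk.injEq]
      constructor <;> omega
    refine hmain.add_lt ?_
    rw [dl_mk]
    have hsiv : LeD (sInv*va) (toLex ((2*n : ℤ), (2*n+1 : ℤ))) :=
      hsile.mulB hv (by omega) (by omega)
    have hrest : LeD ((ga + ua) + sInv*(sInv*va)) (toLex ((2*n+2 : ℤ), (2*n+2 : ℤ))) :=
      ((hg.monoB (by omega) (by omega)).add hule).add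
        (hsile.mulB hsiv (by omega) (by omega))
    exact hrest.lt (lexlt_fst (by push_cast; omega))
  -- the base polynomial φ₁
  have hphi1 : LdD (W 0 0 + (sInv - s) * W 0 1) ((2:ℤ), 2*n) 1 := by
    have e : W 0 0 + (sInv - s) * W 0 1 =
        s*s*(fa - ha) + ((ga + ha - ka) + sInv*(sInv*ka)) := by
      rw [e00, e01]; linear_combination (ha - ka) * hs
    rw [e]
    have hmain : LdD (s*s*(fa - ha)) ((2:ℤ), 2*n) 1 := by
      refine ((ld_s.mul ld_s).mul hfhle).congr ?_ (by norm_num)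
      simp only [Prod.mk_add_mk, Prod.mk.injEq]
      constructor <;> omega
    refine hmain.add_lt ?_
    rw [dl_mk]
    have hsik : LeD (sInv*ka) (toLex ((2*n : ℤ), (2*n : ℤ))) :=
      hsile.mulB hk (by omega) (by omega)
    have hrest : LeD ((ga + ha - ka) + sInv*(sInv*ka))
        (toLex ((2*n+1 : ℤ), (2*n+1 : ℤ))) :=
      (((hg.monoB (by omega) (by omega)).add hh).sub (hk.monoB (by omega) (by omega))).add
        (hsile.mulB hsik (by omega) (by omega))
    exact hrest.lt (lexlt_fst (by push_cast; omega))
  -- the Chebyshev-style recursion for φ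
  have hrec : ∀ j : ℕ, (W^(j+2)) 0 0 + (sInv - s) * ((W^(j+2)) 0 1)
      = (W 0 0 + W 1 1) * ((W^(j+1)) 0 0 + (sInv - s) * ((W^(j+1)) 0 1))
        + -((W^j) 0 0 + (sInv - s) * ((W^j) 0 1)) := by
    intro j
    have hmm : W^(j+2) = (W 0 0 + W 1 1) • W^(j+1) - W^j := by
      calc W^(j+2) = W^j * (W * W) := by rw [pow_succ, pow_succ, mul_assoc]
      _ = W^j * ((W 0 0 + W 1 1) • W - 1) := by rw [hch]
      _ = (W 0 0 + W 1 1) • (W^j * W) - W^j := by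
          rw [mul_sub, mul_one, Matrix.mul_smul]
      _ = (W 0 0 + W 1 1) • W^(j+1) - W^j := by rw [← pow_succ]
    rw [hmm]
    simp only [Matrix.sub_apply, Matrix.smul_apply, smul_eq_mul]
    ring
  -- the main induction on the exponent
  have key : ∀ j : ℕ, LeD ((W^j) 0 0 + (sInv - s) * ((W^j) 0 1))
        (toLex (((2*n+3 : ℤ))*j, ((2*n+3 : ℤ))*j)) ∧
      LdD ((W^(j+1)) 0 0 + (sInv - s) * ((W^(j+1)) 0 1))
        ((2*(j:ℤ)+2, (2*n+1)*j + 2*n)) ((-1)^j) := by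
    intro j
    induction j with
    | zero =>
      constructor
      · have h0 : (W^0) 0 0 + (sInv - s) * ((W^0) 0 1) = 1 := by
          rw [pow_zero]
          simp [Matrix.one_apply]
        rw [h0]
        have := ld_one.le; rw [dl_mk] at this
        exact this.monoB (by push_cast; omega) (by push_cast; omega)
      · rw [pow_one]
        refine hphi1.congr ?_ (by norm_num)
        exact congrArg₂ Prod.mk (by norm_num) (by omega)
    | succ j ih =>
      obtain ⟨ih0, ih1⟩ := ih
      constructor
      · have := ih1.le; rw [dl_mk] at this
        exact this.monoB (by push_cast; nlinarith) (by push_cast; nlinarith)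
      · rw [hrec j]
        have hmain : LdD ((W 0 0 + W 1 1) * ((W^(j+1)) 0 0 + (sInv - s) * ((W^(j+1)) 0 1)))
            ((2*((j:ℤ)+1)+2, (2*n+1)*(j+1) + 2*n)) ((-1)^(j+1)) := by
          refine (hT.mul ih1).congr ?_ ?_
          · simp only [Prod.mk_add_mk]
            exact congrArg₂ Prod.mk (by push_cast; ring) (by ring)
          · rw [pow_succ]; ring
        refine hmain.add_lt ?_
        rw [dl_mk]
        refine (ih0.neg).lt (lexlt_fst ?_)
        push_cast
        nlinarith
  obtain ⟨-, hLd⟩ := key l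
  rw [hLd.deg_eq]
  have harith : ((2*(l:ℤ)+2, (2*n+1)*l + 2*n) : ℤ × ℕ).1 +
      ((((2*(l:ℤ)+2, (2*n+1)*l + 2*n) : ℤ × ℕ).2 : ℕ) : ℤ) =
      (2 * ((n+1 : ℕ) : ℤ) + 1) * ((l+1 : ℕ) : ℤ) - 1 := by
    push_cast; ring
  rw [harith]
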